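/- Let B be an integrable real random variable and G ∈ {m, f} with B conditionally independent of X given G, where X takes values in 𝒳 and r : 𝒳 → ℛ is measurable. Then E[B | r(X), G = g] = E[B | G = g] almost surely, for g ∈ {m, f}, and consequently E[B | r(X)] = β(f) + (β(m) − β(f)) · P(G = m | r(X)), where β(g) = E[B | G = g]. -/

import Mathlib

open MeasureTheory ProbabilityTheory

inductive Gender | m | f
  deriving DecidableEq

instance : MeasurableSpace Gender := ⊤

lemma Gender.measurableSet (s : Set Gender) : MeasurableSet s := trivial

/-- A function that is strongly measurable w.r.t. `comap G` is constant on the fibers of `G`. -/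
lemma fiber_const {Ω : Type*} {G : Ω → Gender} {h : Ω → ℝ}
    (hh : StronglyMeasurable[MeasurableSpace.comap G inferInstance] h) :
    ∀ ω ω', G ω = G ω' → h ω = h ω' := by
  intro ω ω' hGG
  have hmeas : Measurable[MeasurableSpace.comap G inferInstance] h := hh.measurable
  obtain ⟨u, -, hu⟩ := hmeas (measurableSet_singleton (h ω))
  have hω : ω ∈ G ⁻¹' u := by rw [hu]; exact rfl
  have hω' : ω' ∈ G ⁻¹' u := by
    simp only [Set.mem_preimage] at hω ⊢; rwa [← hGG]
  rw [hu] at hω'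
  exact (hω' : h ω' ∈ ({h ω} : Set ℝ)).symm

/-- The conditional expectation w.r.t. `σ(G)` is, on the fiber `{G = g}` of positive measure,
equal to the average of `h` over that fiber. -/
lemma condexp_on_fiber {Ω : Type*} [m0 : MeasurableSpace Ω]
    (P : Measure Ω) [IsProbabilityMeasure P] {G : Ω → Gender} (hG : Measurable G)
    {h : Ω → ℝ} (hh : Integrable h P) {g : Gender} (hg : P (G ⁻¹' {g}) ≠ 0)
    {ω : Ω} (hω : G ω = g) :
    (P[h | MeasurableSpace.comap G inferInstance]) ω
      = (P (G ⁻¹' {g})).toReal⁻¹ * ∫ x in G ⁻¹' {g}, h x ∂P := by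
  have h𝒢 : (MeasurableSpace.comap G (inferInstance : MeasurableSpace Gender)) ≤ m0 := hG.comap_le
  have hA : MeasurableSet (G ⁻¹' {g}) := hG (Gender.measurableSet _)
  have hA𝒢 : MeasurableSet[MeasurableSpace.comap G inferInstance] (G ⁻¹' {g}) :=
    ⟨{g}, Gender.measurableSet _, rfl⟩
  have hconst : ∀ x ∈ G ⁻¹' {g}, (P[h | (MeasurableSpace.comap G (inferInstance : MeasurableSpace Gender))]) x = (P[h | (MeasurableSpace.comap G (inferInstance : MeasurableSpace Gender))]) ω := by
    intro x hx
    exact fiber_const stronglyMeasurable_condExp x ω (by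
      simp only [Set.mem_preimage, Set.mem_singleton_iff] at hx; rw [hx, hω])
  have hint : ∫ x in G ⁻¹' {g}, (P[h | (MeasurableSpace.comap G (inferInstance : MeasurableSpace Gender))]) x ∂P = ∫ x in G ⁻¹' {g}, h x ∂P :=
    setIntegral_condExp h𝒢 hh hA𝒢
  rw [setIntegral_congr_fun hA hconst, setIntegral_const, smul_eq_mul] at hint
  have hne : (P (G ⁻¹' {g})).toReal ≠ 0 := by
    simp [ENNReal.toReal_eq_zero_iff, hg, measure_ne_top P _]
  field_simp
  rw [mul_comm]
  exact hint

theorem condexp_collapse_aux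
    {Ω : Type*} [m0 : MeasurableSpace Ω] [StandardBorelSpace Ω] [Nonempty Ω]
    {𝒳 ℛ : Type*} [MeasurableSpace 𝒳] [MeasurableSpace ℛ]
    (P : Measure Ω) [IsProbabilityMeasure P]
    (X : Ω → 𝒳) (G : Ω → Gender) (B : Ω → ℝ)
    (r : 𝒳 → ℛ)
    (hX : Measurable X) (hG : Measurable G) (hB : Integrable B P) (hBm : Measurable B)
    (hr : Measurable r)
    (hGm_pos : 0 < P (G ⁻¹' {Gender.m})) (hGm_lt : P (G ⁻¹' {Gender.m}) < 1)
    (hCI : CondIndepFun (MeasurableSpace.comap G inferInstance)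
      (measurable_iff_comap_le.mp hG) B X P)
    (β : Gender → ℝ) (hβ : ∀ g, β g = ∫ ω, B ω ∂(P[|G ⁻¹' {g}])) :
    (P[B | MeasurableSpace.comap (fun ω => r (X ω)) inferInstance
        ⊔ MeasurableSpace.comap G inferInstance]
      =ᵐ[P] fun ω => β (G ω))
    ∧ (P[B | MeasurableSpace.comap (fun ω => r (X ω)) inferInstance]
      =ᵐ[P] fun ω =>
        β Gender.f + (β Gender.m - β Gender.f)
          * (P⟦G ⁻¹' {Gender.m} | MeasurableSpace.comap (fun ω => r (X ω)) inferInstance⟧) ω) := by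
  have hrX : Measurable fun ω => r (X ω) := hr.comp hX
  have hGle : (MeasurableSpace.comap G (inferInstance : MeasurableSpace Gender)) ≤ m0 := hG.comap_le
  have hRle : (MeasurableSpace.comap (fun ω => r (X ω)) (inferInstance : MeasurableSpace ℛ)) ≤ m0 := hrX.comap_le
  have hMle : (MeasurableSpace.comap (fun ω => r (X ω)) (inferInstance : MeasurableSpace ℛ)) ⊔ (MeasurableSpace.comap G (inferInstance : MeasurableSpace Gender)) ≤ m0 := sup_le hRle hGle
  have hA : ∀ g : Gender, MeasurableSet (G ⁻¹' {g}) := fun g => hG (Gender.measurableSet _)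
  have hAcompl : G ⁻¹' {Gender.f} = (G ⁻¹' {Gender.m})ᶜ := by
    ext x; cases h : G x <;> simp [h]
  have hA_ne : ∀ g, P (G ⁻¹' {g}) ≠ 0 := by
    intro g; cases g
    · exact hGm_pos.ne'
    · intro h0
      have hs := measure_add_measure_compl (μ := P) (hA Gender.m)
      rw [← hAcompl, h0, add_zero, measure_univ] at hs
      exact hGm_lt.ne hs
  have hcondInt : ∀ (h : Ω → ℝ) (s : Set Ω),
      ∫ x, h x ∂(P[|s]) = (P s).toReal⁻¹ * ∫ x in s, h x ∂P := by
    intro h s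
    rw [show (P[|s]) = (P s)⁻¹ • P.restrict s from rfl, integral_smul_measure,
      ENNReal.toReal_inv, smul_eq_mul]
  have hβ' : ∀ g, β g = (P (G ⁻¹' {g})).toReal⁻¹ * ∫ x in G ⁻¹' {g}, B x ∂P :=
    fun g => (hβ g).trans (hcondInt B _)
  have hBG : ∀ (h : Ω → ℝ), Integrable h P → ∀ ω : Ω,
      (P[h|(MeasurableSpace.comap G (inferInstance : MeasurableSpace Gender))]) ω = (P (G ⁻¹' {G ω})).toReal⁻¹ * ∫ x in G ⁻¹' {G ω}, h x ∂P :=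
    fun h hh ω => condexp_on_fiber P hG hh (hA_ne (G ω)) rfl
  have hBβ : ∀ ω, (P[B|(MeasurableSpace.comap G (inferInstance : MeasurableSpace Gender))]) ω = β (G ω) := fun ω => by
    rw [hBG B hB ω, ← hβ' (G ω)]
  have hβGeq : (fun ω => β (G ω)) = P[B|(MeasurableSpace.comap G (inferInstance : MeasurableSpace Gender))] := funext fun ω => (hBβ ω).symm
  have hβG_int : Integrable (fun ω => β (G ω)) P := by
    rw [hβGeq]; exact integrable_condExp
  have hβG_sm : StronglyMeasurable[(MeasurableSpace.comap G (inferInstance : MeasurableSpace Gender))] fun ω => β (G ω) := by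
    rw [hβGeq]; exact stronglyMeasurable_condExp
  -- the conditional expectation of an indicator, on a fiber of `G`
  have hPcond : ∀ (W : Set Ω), MeasurableSet W → ∀ ω : Ω,
      (P[W.indicator (fun _ => (1:ℝ))|(MeasurableSpace.comap G (inferInstance : MeasurableSpace Gender))]) ω
        = (P (G ⁻¹' {G ω})).toReal⁻¹ * (P (W ∩ G ⁻¹' {G ω})).toReal := by
    intro W hW ω
    rw [hBG _ ((integrable_const (1:ℝ)).indicator hW) ω]
    congr 1
    calc ∫ x in G ⁻¹' {G ω}, W.indicator (fun _ => (1:ℝ)) x ∂P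
        = ∫ x in W, (1:ℝ) ∂(P.restrict (G ⁻¹' {G ω})) := integral_indicator hW
      _ = ((P.restrict (G ⁻¹' {G ω})) W).toReal • (1:ℝ) := setIntegral_const 1
      _ = (P (W ∩ G ⁻¹' {G ω})).toReal := by
          rw [Measure.restrict_apply hW, smul_eq_mul, mul_one]
  have hCI' : CondIndepFun (MeasurableSpace.comap G (inferInstance : MeasurableSpace Gender)) (measurable_iff_comap_le.mp hG) B (fun ω => r (X ω)) P := by
    have h := hCI.comp measurable_id hr
    simpa [Function.comp_def] using h
  have hmul := (condIndepFun_iff_condExp_inter_preimage_eq_mul hBm hrX).mp hCI'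
  have hfiber_ex : ∀ {p : Ω → Prop}, (∀ᵐ ω ∂P, p ω) → ∀ g : Gender, ∃ ω, G ω = g ∧ p ω := by
    intro p hp g
    by_contra hcon
    push_neg at hcon
    refine hA_ne g (measure_mono_null ?_ (ae_iff.mp hp))
    intro x hx
    exact hcon x (by simpa using hx)
  have hIndep : ∀ g : Gender, IndepFun B (fun ω => r (X ω)) (P[|G ⁻¹' {g}]) := by
    intro g
    haveI := cond_isProbabilityMeasure (μ := P) (hA_ne g)
    rw [indepFun_iff_measure_inter_preimage_eq_mul]
    intro u v hu hv
    have hS : MeasurableSet (B ⁻¹' u) := hBm hu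
    have hT : MeasurableSet ((fun ω => r (X ω)) ⁻¹' v) := hrX hv
    obtain ⟨ω, hω, heq⟩ := hfiber_ex (hmul u v hu hv) g
    simp only [] at heq
    rw [hPcond _ (hS.inter hT) ω, hPcond _ hS ω, hPcond _ hT ω, hω] at heq
    have hq : ∀ W : Set Ω, ((P[|G ⁻¹' {g}]) W).toReal
        = (P (G ⁻¹' {g})).toReal⁻¹ * (P (W ∩ G ⁻¹' {g})).toReal := by
      intro W
      rw [cond_apply (hA g), ENNReal.toReal_mul, ENNReal.toReal_inv, Set.inter_comm]
    refine (ENNReal.toReal_eq_toReal_iff' (measure_ne_top _ _)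
      (ENNReal.mul_ne_top (measure_ne_top _ _) (measure_ne_top _ _))).mp ?_
    rw [ENNReal.toReal_mul, hq, hq, hq]
    exact heq
  -- key integral identity on products of an `r∘X`-set with a fiber of `G`
  have hkey : ∀ (v : Set ℛ), MeasurableSet v → ∀ g : Gender,
      ∫ x in (fun ω => r (X ω)) ⁻¹' v ∩ G ⁻¹' {g}, B x ∂P
        = β g * (P ((fun ω => r (X ω)) ⁻¹' v ∩ G ⁻¹' {g})).toReal := by
    intro v hv g
    haveI := cond_isProbabilityMeasure (μ := P) (hA_ne g)
    have hs : MeasurableSet ((fun ω => r (X ω)) ⁻¹' v) := hrX hv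
    have hY : (fun ω => v.indicator (fun _ => (1:ℝ)) (r (X ω)))
        = ((fun ω => r (X ω)) ⁻¹' v).indicator (fun _ => (1:ℝ)) := by
      funext ω
      by_cases h : r (X ω) ∈ v <;> simp [Set.indicator_apply, Set.mem_preimage, h]
    have hind : IndepFun B (fun ω => v.indicator (fun _ => (1:ℝ)) (r (X ω)))
        (P[|G ⁻¹' {g}]) := by
      have h := (hIndep g).comp measurable_id ((measurable_const : Measurable fun _ : ℛ => (1:ℝ)).indicator hv)
      simpa [Function.comp_def] using h
    have hBq : Integrable B (P[|G ⁻¹' {g}]) := by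
      rw [show (P[|G ⁻¹' {g}]) = (P (G ⁻¹' {g}))⁻¹ • P.restrict (G ⁻¹' {g}) from rfl]
      exact hB.restrict.smul_measure (by simp [ENNReal.inv_ne_top, hA_ne g])
    have hmulint := ProbabilityTheory.IndepFun.integral_mul_eq_mul_integral hind hBm.aestronglyMeasurable
      (((measurable_const : Measurable fun _ : ℛ => (1:ℝ)).indicator hv).comp hrX).aestronglyMeasurable
    have hBY : B * (fun ω => v.indicator (fun _ => (1:ℝ)) (r (X ω)))
        = ((fun ω => r (X ω)) ⁻¹' v).indicator B := by
      funext ω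
      by_cases h : r (X ω) ∈ v <;>
        simp [Pi.mul_apply, Set.indicator_apply, Set.mem_preimage, h]
    rw [hBY, hY, ← hβ g] at hmulint
    rw [integral_indicator hs] at hmulint
    have hqres : (P[|G ⁻¹' {g}]).restrict ((fun ω => r (X ω)) ⁻¹' v)
        = (P (G ⁻¹' {g}))⁻¹ • P.restrict ((fun ω => r (X ω)) ⁻¹' v ∩ G ⁻¹' {g}) := by
      rw [show (P[|G ⁻¹' {g}]) = (P (G ⁻¹' {g}))⁻¹ • P.restrict (G ⁻¹' {g}) from rfl,
        Measure.restrict_smul, Measure.restrict_restrict hs]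
    rw [show ∫ x in (fun ω => r (X ω)) ⁻¹' v, B x ∂(P[|G ⁻¹' {g}])
        = ∫ x, B x ∂((P (G ⁻¹' {g}))⁻¹ • P.restrict ((fun ω => r (X ω)) ⁻¹' v ∩ G ⁻¹' {g}))
      from by rw [← hqres], integral_smul_measure, ENNReal.toReal_inv] at hmulint
    rw [integral_indicator_const (1:ℝ) hs, measureReal_def, cond_apply (hA g)] at hmulint
    simp only [smul_eq_mul, mul_one, ENNReal.toReal_mul, ENNReal.toReal_inv] at hmulint
    rw [Set.inter_comm (G ⁻¹' {g})] at hmulint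
    have ha : (P (G ⁻¹' {g})).toReal ≠ 0 := by
      simp [ENNReal.toReal_eq_zero_iff, hA_ne g, measure_ne_top P _]
    have h2 : (P (G ⁻¹' {g})).toReal⁻¹ * ∫ x in (fun ω => r (X ω)) ⁻¹' v ∩ G ⁻¹' {g}, B x ∂P
        = (P (G ⁻¹' {g})).toReal⁻¹
          * (β g * (P ((fun ω => r (X ω)) ⁻¹' v ∩ G ⁻¹' {g})).toReal) := by
      rw [hmulint]; ring
    exact mul_left_cancel₀ (inv_ne_zero ha) h2
  have hkeyβ : ∀ (u : Set Ω), MeasurableSet u → ∀ g : Gender,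
      ∫ x in u ∩ G ⁻¹' {g}, β (G x) ∂P = β g * (P (u ∩ G ⁻¹' {g})).toReal := by
    intro u hu g
    rw [setIntegral_congr_fun (g := fun _ => β g) (hu.inter (hA g))
      (fun x hx => by rw [show G x = g from hx.2]), setIntegral_const, smul_eq_mul, mul_comm]; rfl
  have htotal : ∫ x, β (G x) ∂P = ∫ x, B x ∂P := by
    rw [hβGeq]; exact integral_condExp hGle
  have hQ : ∀ u : Set Ω, MeasurableSet[(MeasurableSpace.comap (fun ω => r (X ω)) (inferInstance : MeasurableSpace ℛ)) ⊔ (MeasurableSpace.comap G (inferInstance : MeasurableSpace Gender))] u →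
      ∫ x in u, β (G x) ∂P = ∫ x in u, B x ∂P := by
    have hgen : ((MeasurableSpace.comap (fun ω => r (X ω)) (inferInstance : MeasurableSpace ℛ)) ⊔ (MeasurableSpace.comap G (inferInstance : MeasurableSpace Gender)) : MeasurableSpace Ω) = MeasurableSpace.generateFrom
        {u : Set Ω | ∃ (v : Set ℛ) (w : Set Gender), MeasurableSet v ∧
          u = (fun ω => r (X ω)) ⁻¹' v ∩ G ⁻¹' w} := by
      apply le_antisymm
      · apply sup_le
        · rintro u ⟨v, hv, rfl⟩
          exact MeasurableSpace.measurableSet_generateFrom ⟨v, Set.univ, hv, by simp⟩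
        · rintro u ⟨w, hw, rfl⟩
          exact MeasurableSpace.measurableSet_generateFrom
            ⟨Set.univ, w, MeasurableSet.univ, by simp⟩
      · apply MeasurableSpace.generateFrom_le
        rintro u ⟨v, w, hv, rfl⟩
        exact ((le_sup_left : (MeasurableSpace.comap (fun ω => r (X ω)) (inferInstance : MeasurableSpace ℛ)) ≤ (MeasurableSpace.comap (fun ω => r (X ω)) (inferInstance : MeasurableSpace ℛ)) ⊔ (MeasurableSpace.comap G (inferInstance : MeasurableSpace Gender))) _ ⟨v, hv, rfl⟩).inter
          ((le_sup_right : (MeasurableSpace.comap G (inferInstance : MeasurableSpace Gender)) ≤ (MeasurableSpace.comap (fun ω => r (X ω)) (inferInstance : MeasurableSpace ℛ)) ⊔ (MeasurableSpace.comap G (inferInstance : MeasurableSpace Gender))) _ ⟨w, Gender.measurableSet w, rfl⟩)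
    have hpi : IsPiSystem {u : Set Ω | ∃ (v : Set ℛ) (w : Set Gender), MeasurableSet v ∧
        u = (fun ω => r (X ω)) ⁻¹' v ∩ G ⁻¹' w} := by
      rintro u1 ⟨v1, w1, hv1, rfl⟩ u2 ⟨v2, w2, hv2, rfl⟩ -
      exact ⟨v1 ∩ v2, w1 ∩ w2, hv1.inter hv2, by
        rw [Set.preimage_inter, Set.preimage_inter]
        exact Set.inter_inter_inter_comm _ _ _ _⟩
    refine fun u hu => MeasurableSpace.induction_on_inter
      (C := fun u _ => ∫ x in u, β (G x) ∂P = ∫ x in u, B x ∂P) (m := (MeasurableSpace.comap (fun ω => r (X ω)) (inferInstance : MeasurableSpace ℛ)) ⊔ (MeasurableSpace.comap G (inferInstance : MeasurableSpace Gender))) hgen hpi ?_ ?_ ?_ ?_ u hu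
    · simp
    · rintro t ⟨v, w, hv, rfl⟩
      have hsv : MeasurableSet ((fun ω => r (X ω)) ⁻¹' v) := hrX hv
      by_cases hmw : Gender.m ∈ w <;> by_cases hfw : Gender.f ∈ w
      · have hw : G ⁻¹' w = Set.univ := by
          ext x; cases h : G x <;> simp [h, hmw, hfw]
        have hsplit : (fun ω => r (X ω)) ⁻¹' v ∩ G ⁻¹' w
            = ((fun ω => r (X ω)) ⁻¹' v ∩ G ⁻¹' {Gender.m})
              ∪ ((fun ω => r (X ω)) ⁻¹' v ∩ G ⁻¹' {Gender.f}) := by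
          rw [hw, Set.inter_univ, ← Set.inter_union_distrib_left]
          ext x; cases h : G x <;> simp [h]
        have hdisj : Disjoint ((fun ω => r (X ω)) ⁻¹' v ∩ G ⁻¹' {Gender.m})
            ((fun ω => r (X ω)) ⁻¹' v ∩ G ⁻¹' {Gender.f}) := by
          rw [Set.disjoint_left]
          rintro x ⟨-, h1⟩ ⟨-, h2⟩
          rw [Set.mem_preimage, Set.mem_singleton_iff] at h1 h2
          rw [h1] at h2; cases h2
        rw [hsplit,
          setIntegral_union hdisj (hsv.inter (hA Gender.f)) hβG_int.integrableOn
            hβG_int.integrableOn,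
          setIntegral_union hdisj (hsv.inter (hA Gender.f)) hB.integrableOn hB.integrableOn,
          hkey v hv Gender.m, hkey v hv Gender.f, hkeyβ _ hsv Gender.m, hkeyβ _ hsv Gender.f]
      · have hw : G ⁻¹' w = G ⁻¹' {Gender.m} := by
          ext x; cases h : G x <;> simp [h, hmw, hfw]
        rw [hw, hkey v hv Gender.m, hkeyβ _ hsv Gender.m]
      · have hw : G ⁻¹' w = G ⁻¹' {Gender.f} := by
          ext x; cases h : G x <;> simp [h, hmw, hfw]
        rw [hw, hkey v hv Gender.f, hkeyβ _ hsv Gender.f]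
      · have hw : G ⁻¹' w = ∅ := by
          ext x; cases h : G x <;> simp [h, hmw, hfw]
        rw [hw, Set.inter_empty]; simp
    · intro t htm hQt
      have ht : MeasurableSet t := hMle _ htm
      have h1 := integral_add_compl ht hβG_int
      have h2 := integral_add_compl ht hB
      rw [htotal] at h1
      linarith
    · intro f hdisj hfm hQf
      have hf : ∀ i, MeasurableSet (f i) := fun i => hMle _ (hfm i)
      rw [integral_iUnion hf hdisj hβG_int.integrableOn,
        integral_iUnion hf hdisj hB.integrableOn]
      exact tsum_congr hQf
  have key1 : P[B | (MeasurableSpace.comap (fun ω => r (X ω)) (inferInstance : MeasurableSpace ℛ)) ⊔ (MeasurableSpace.comap G (inferInstance : MeasurableSpace Gender))] =ᵐ[P] fun ω => β (G ω) :=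
    (ae_eq_condExp_of_forall_setIntegral_eq hMle hB
      (fun s _ _ => hβG_int.integrableOn) (fun s hs _ => hQ s hs)
      ((hβG_sm.mono (le_sup_right (a := MeasurableSpace.comap (fun ω => r (X ω)) (inferInstance : MeasurableSpace ℛ)))).aestronglyMeasurable)).symm
  refine ⟨key1, ?_⟩
  have h1 : P[B | (MeasurableSpace.comap (fun ω => r (X ω)) (inferInstance : MeasurableSpace ℛ))] =ᵐ[P] P[fun ω => β (G ω) | (MeasurableSpace.comap (fun ω => r (X ω)) (inferInstance : MeasurableSpace ℛ))] :=
    (condExp_condExp_of_le le_sup_left hMle).symm.trans (condExp_congr_ae key1)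
  have hdec : (fun ω => β (G ω)) = (fun _ => β Gender.f)
      + (β Gender.m - β Gender.f) • (G ⁻¹' {Gender.m}).indicator (fun _ => (1:ℝ)) := by
    funext ω
    cases h : G ω <;>
      simp [Set.indicator_apply, Set.mem_preimage, h, smul_eq_mul]
  have hint : Integrable
      ((β Gender.m - β Gender.f) • (G ⁻¹' {Gender.m}).indicator (fun _ => (1:ℝ))) P :=
    (((integrable_const (1:ℝ)).indicator (hA Gender.m)).smul _)
  have h2 : P[fun ω => β (G ω) | (MeasurableSpace.comap (fun ω => r (X ω)) (inferInstance : MeasurableSpace ℛ))] =ᵐ[P] (fun _ => β Gender.f)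
      + (β Gender.m - β Gender.f) • P[(G ⁻¹' {Gender.m}).indicator (fun _ => (1:ℝ)) | (MeasurableSpace.comap (fun ω => r (X ω)) (inferInstance : MeasurableSpace ℛ))] := by
    rw [hdec]
    refine (condExp_add (integrable_const _) hint _).trans ?_
    refine Filter.EventuallyEq.add ?_ (condExp_smul _ _ _)
    rw [condExp_const hRle]
  refine h1.trans (h2.trans ?_)
  filter_upwards [] with ω
  simp [smul_eq_mul]

/-- **Conditional-mean collapse under conditional independence**: if `B ⫫ X | G`, then
`E[B | r(X), G] = E[B | G]` a.s., and consequently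
`E[B | r(X)] = β(f) + (β(m) − β(f)) · P(G = m | r(X))` where `β(g) = E[B | G = g]`. -/
theorem condexp_collapse
    {Ω : Type*} [MeasurableSpace Ω] [StandardBorelSpace Ω] [Nonempty Ω]
    {𝒳 ℛ : Type*} [MeasurableSpace 𝒳] [MeasurableSpace ℛ]
    (P : Measure Ω) [IsProbabilityMeasure P]
    (X : Ω → 𝒳) (G : Ω → Gender) (B : Ω → ℝ)
    (r : 𝒳 → ℛ)
    (hX : Measurable X) (hG : Measurable G) (hB : Integrable B P)
    (hr : Measurable r)
    -- non-degeneracy: 0 < P(G = m) < 1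
    (hGm_pos : 0 < P (G ⁻¹' {Gender.m})) (hGm_lt : P (G ⁻¹' {Gender.m}) < 1)
    -- B is conditionally independent of X given G
    (hCI : CondIndepFun (MeasurableSpace.comap G inferInstance)
      (measurable_iff_comap_le.mp hG) B X P)
    -- β(g) = E[B | G = g]
    (β : Gender → ℝ) (hβ : ∀ g, β g = ∫ ω, B ω ∂(P[|G ⁻¹' {g}])) :
    (P[B | MeasurableSpace.comap (fun ω => r (X ω)) inferInstance
        ⊔ MeasurableSpace.comap G inferInstance]
      =ᵐ[P] fun ω => β (G ω))
    ∧ (P[B | MeasurableSpace.comap (fun ω => r (X ω)) inferInstance]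
      =ᵐ[P] fun ω =>
        β Gender.f + (β Gender.m - β Gender.f)
          * (P⟦G ⁻¹' {Gender.m} | MeasurableSpace.comap (fun ω => r (X ω)) inferInstance⟧) ω) := by
  obtain ⟨B', hB'sm, hBB'⟩ : ∃ B', StronglyMeasurable B' ∧ B =ᵐ[P] B' :=
    ⟨hB.1.mk B, hB.1.stronglyMeasurable_mk, hB.1.ae_eq_mk⟩
  have hB'm : Measurable B' := hB'sm.measurable
  have hB' : Integrable B' P := hB.congr hBB'
  -- transfer conditional independence along the a.e. equality `B =ᵐ B'`
  have hCI' : CondIndepFun (MeasurableSpace.comap G inferInstance)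
      (measurable_iff_comap_le.mp hG) B' X P := by
    have hN : P {x | B x ≠ B' x} = 0 := by
      exact ae_iff.mp hBB'
    have hNmeas : MeasurableSet (toMeasurable P {x | B x ≠ B' x}) :=
      measurableSet_toMeasurable _ _
    have hN0 : P (toMeasurable P {x | B x ≠ B' x}) = 0 := by
      rw [measure_toMeasurable]; exact hN
    have hker : ∀ᵐ ω ∂(P.trim (measurable_iff_comap_le.mp hG)),
        condExpKernel P (MeasurableSpace.comap G inferInstance) ω
          (toMeasurable P {x | B x ≠ B' x}) = 0 := by
      have hc : P[(toMeasurable P {x | B x ≠ B' x}).indicator (fun _ => (1:ℝ))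
          | MeasurableSpace.comap G inferInstance] =ᵐ[P] 0 := by
        have hi : (toMeasurable P {x | B x ≠ B' x}).indicator (fun _ => (1:ℝ)) =ᵐ[P] 0 := by
          filter_upwards [measure_eq_zero_iff_ae_notMem.mp hN0] with x hx
          simp [Set.indicator_of_notMem hx]
        exact (condExp_congr_ae hi).trans (by rw [condExp_zero])
      have h1 : (fun ω => (condExpKernel P (MeasurableSpace.comap G inferInstance) ω
          (toMeasurable P {x | B x ≠ B' x})).toReal) =ᵐ[P] 0 :=
        (condExpKernel_ae_eq_condExp (measurable_iff_comap_le.mp hG) hNmeas).trans hc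
      have hE0 : P {ω | ¬ condExpKernel P (MeasurableSpace.comap G inferInstance) ω
          (toMeasurable P {x | B x ≠ B' x}) = 0} = 0 := by
        refine measure_mono_null ?_ (ae_iff.mp h1)
        intro ω hω
        simp only [Set.mem_setOf_eq, Pi.zero_apply] at hω ⊢
        exact fun htr => hω (by
          rcases (ENNReal.toReal_eq_zero_iff _).mp htr with h | h
          · exact h
          · exact absurd h (measure_ne_top _ _))
      rw [ae_iff]
      have hEm : MeasurableSet[MeasurableSpace.comap G inferInstance]
          {ω | ¬ condExpKernel P (MeasurableSpace.comap G inferInstance) ω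
            (toMeasurable P {x | B x ≠ B' x}) = 0} :=
        ((measurable_condExpKernel hNmeas) (measurableSet_singleton 0)).compl
      rw [trim_measurableSet_eq _ hEm]
      exact hE0
    have hCIk : ProbabilityTheory.Kernel.IndepFun B X
        (condExpKernel P (MeasurableSpace.comap G inferInstance))
        (P.trim (measurable_iff_comap_le.mp hG)) := hCI
    refine (ProbabilityTheory.Kernel.IndepFun.congr' hCIk ?_ (Filter.Eventually.of_forall fun a => Filter.EventuallyEq.rfl) :)
    filter_upwards [hker] with a ha
    rw [Filter.EventuallyEq, ae_iff]
    exact measure_mono_null (fun x hx => subset_toMeasurable P _ hx) ha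
  have hβ'' : ∀ g, β g = ∫ ω, B' ω ∂(P[|G ⁻¹' {g}]) := by
    intro g
    rw [hβ g]
    refine integral_congr_ae ?_
    rw [show (P[|G ⁻¹' {g}]) = (P (G ⁻¹' {g}))⁻¹ • P.restrict (G ⁻¹' {g}) from rfl]
    exact Measure.ae_smul_measure (ae_restrict_of_ae hBB') _
  obtain ⟨k1, k2⟩ := condexp_collapse_aux P X G B' r hX hG hB' hB'm hr hGm_pos hGm_lt hCI' β hβ''
  exact ⟨(condExp_congr_ae hBB').trans k1, (condExp_congr_ae hBB').trans k2⟩
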